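/- Let G be a finite group, I a set, H_i ≤ G subgroups and ρ_i : H_i → G injective group homomorphisms, and let Γ be the associated group HNN-extension ⟨G, t_i (i ∈ I) | relations of G, h t_i = t_i ρ_i(h) for all h ∈ H_i⟩. Then Γ is a Zappa–Szép product of a free group and G: there exist a set X and a group homomorphism j : FG(X) → Γ such that the map FG(X) × G → Γ, (w, g) ↦ j(w)·[g], is a bijection. -/

import Mathlib

universe u v

/-- The relators of the group HNN-extension
`⟨G, tᵢ (i ∈ I) | relations of G, h tᵢ = tᵢ ρᵢ(h) for h ∈ Hᵢ⟩`,
as elements of the free group on the generating set `G ⊕ I`. -/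
def grpHNNRels (G : Type u) [Group G] {I : Type v} (H : I → Subgroup G)
    (ρ : ∀ i, H i →* G) : Set (FreeGroup (G ⊕ I)) :=
  {w | (∃ g h : G, w = FreeGroup.of (Sum.inl g) * FreeGroup.of (Sum.inl h) *
          (FreeGroup.of (Sum.inl (g * h)))⁻¹) ∨
       w = FreeGroup.of (Sum.inl (1 : G)) ∨
       (∃ (i : I) (h : H i), w = FreeGroup.of (Sum.inl (h : G)) * FreeGroup.of (Sum.inr i) *
          (FreeGroup.of (Sum.inl (ρ i h)))⁻¹ * (FreeGroup.of (Sum.inr i))⁻¹)}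

namespace Stmt15Aux

set_option linter.unusedSectionVars false

variable {G : Type u} [Group G] {I : Type v} (H : I → Subgroup G) (ρ : ∀ i, H i →* G)

theorem rel_eq_one {r : FreeGroup (G ⊕ I)} (hr : r ∈ grpHNNRels G H ρ) :
    PresentedGroup.mk (grpHNNRels G H ρ) r = 1 :=
  (QuotientGroup.eq_one_iff r).mpr (Subgroup.subset_normalClosure hr)

theorem of_eq (x : G ⊕ I) :
    (PresentedGroup.of x : PresentedGroup (grpHNNRels G H ρ)) =
      PresentedGroup.mk (grpHNNRels G H ρ) (FreeGroup.of x) := rfl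

/-- The canonical homomorphism `G →* Γ`. -/
def em : G →* PresentedGroup (grpHNNRels G H ρ) where
  toFun g := PresentedGroup.of (Sum.inl g)
  map_one' := by
    have h := rel_eq_one H ρ (Or.inr (Or.inl rfl))
    exact h
  map_mul' g₁ g₂ := by
    have h := rel_eq_one H ρ (Or.inl ⟨g₁, g₂, rfl⟩)
    simp only [map_mul, map_inv, mul_inv_eq_one] at h
    exact h.symm

/-- The stable letters in `Γ`. -/
def tt (i : I) : PresentedGroup (grpHNNRels G H ρ) := PresentedGroup.of (Sum.inr i)

theorem em_tt (i : I) (h : H i) :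
    em H ρ (h : G) * tt H ρ i = tt H ρ i * em H ρ (ρ i h) := by
  have hr := rel_eq_one H ρ (Or.inr (Or.inr ⟨i, h, rfl⟩))
  simp only [map_mul, map_inv] at hr
  rw [mul_inv_eq_one] at hr
  rw [mul_inv_eq_iff_eq_mul] at hr
  simpa [em, tt, of_eq] using hr

theorem em_rho_tt_inv (i : I) (h : H i) :
    em H ρ (ρ i h) * (tt H ρ i)⁻¹ = (tt H ρ i)⁻¹ * em H ρ (h : G) := by
  have h1 := (em_tt H ρ i h).symm
  calc em H ρ (ρ i h) * (tt H ρ i)⁻¹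
      = (tt H ρ i)⁻¹ * (tt H ρ i * em H ρ (ρ i h)) * (tt H ρ i)⁻¹ := by group
    _ = (tt H ρ i)⁻¹ * (em H ρ (h : G) * tt H ρ i) * (tt H ρ i)⁻¹ := by rw [h1]
    _ = (tt H ρ i)⁻¹ * em H ρ (h : G) := by group

/-- The basis of the free part. -/
abbrev XX : Type (max u v) := Σ i : I, G ⧸ H i

theorem mem_H (i : I) (g : G) : ((QuotientGroup.mk g : G ⧸ H i)).out⁻¹ * g ∈ H i :=
  QuotientGroup.eq.mp (QuotientGroup.out_eq' _)

/-- `hElt i g` is the unique `h ∈ Hᵢ` with `g = out(g Hᵢ) * h`. -/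
noncomputable def hElt (i : I) (g : G) : H i :=
  ⟨((QuotientGroup.mk g : G ⧸ H i)).out⁻¹ * g, mem_H H i g⟩

theorem out_mul_hElt (i : I) (g : G) :
    ((QuotientGroup.mk g : G ⧸ H i)).out * (hElt H i g : G) = g := by
  simp [hElt]

theorem hElt_mul (i : I) (g : G) (h : H i) : hElt H i (g * h) = hElt H i g * h := by
  apply Subtype.ext
  have hq : (QuotientGroup.mk (g * h) : G ⧸ H i) = QuotientGroup.mk g :=
    QuotientGroup.mk_mul_of_mem g h.2
  show ((QuotientGroup.mk (g * (h : G)) : G ⧸ H i)).out⁻¹ * (g * h) =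
    (((QuotientGroup.mk g : G ⧸ H i)).out⁻¹ * g) * h
  rw [hq, mul_assoc]

theorem hElt_out_mul (i : I) (q : G ⧸ H i) (h : H i) : hElt H i (q.out * h) = h := by
  have h0 : hElt H i q.out = 1 := by
    apply Subtype.ext
    show ((QuotientGroup.mk q.out : G ⧸ H i)).out⁻¹ * q.out = 1
    rw [QuotientGroup.out_eq']
    exact inv_mul_cancel _
  rw [hElt_mul, h0, one_mul]

/-- The permutation of `FreeGroup XX × G` corresponding to an element of `G`. -/
def tau (g : G) : Equiv.Perm (FreeGroup (XX H) × G) :=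
  Equiv.prodCongr (Equiv.refl _) (Equiv.mulRight g)

theorem tau_apply (g : G) (p : FreeGroup (XX H) × G) : tau H g p = (p.1, p.2 * g) := rfl

variable [Finite G] (hinj : ∀ i, Function.Injective (ρ i))
include hinj

theorem quot_card (i : I) : Nonempty ((G ⧸ H i) ≃ (G ⧸ (ρ i).range)) := by
  rw [← Finite.card_eq]
  have h1 := Subgroup.card_eq_card_quotient_mul_card_subgroup (H i)
  have h2 := Subgroup.card_eq_card_quotient_mul_card_subgroup ((ρ i).range)
  have h3 : Nat.card ((ρ i).range) = Nat.card (H i) :=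
    Nat.card_congr (MonoidHom.ofInjective (hinj i)).toEquiv.symm
  rw [h3] at h2
  have hpos : 0 < Nat.card (H i) := Nat.card_pos
  exact Nat.eq_of_mul_eq_mul_right hpos (h1.symm.trans h2)

/-- A chosen bijection `G ⧸ Hᵢ ≃ G ⧸ ρᵢ(Hᵢ)`. -/
noncomputable def ep (i : I) : (G ⧸ H i) ≃ (G ⧸ (ρ i).range) :=
  Classical.choice (quot_card H ρ hinj i)

/-- A choice of elements of `G` realising the bijection `ep`. -/
noncomputable def B (i : I) (q : G ⧸ H i) : G := (ep H ρ hinj i q).out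

theorem mk_B (i : I) (q : G ⧸ H i) :
    (QuotientGroup.mk (B H ρ hinj i q) : G ⧸ (ρ i).range) = ep H ρ hinj i q :=
  QuotientGroup.out_eq' _

/-- The basis elements of the free subgroup, as elements of `Γ`. -/
noncomputable def kk (i : I) (q : G ⧸ H i) : PresentedGroup (grpHNNRels G H ρ) :=
  em H ρ q.out * tt H ρ i * (em H ρ (B H ρ hinj i q))⁻¹

/-- The homomorphism from the free group on `XX` into `Γ`. -/
noncomputable def jj : FreeGroup (XX H) →* PresentedGroup (grpHNNRels G H ρ) :=
  FreeGroup.lift fun x => kk H ρ hinj x.1 x.2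

theorem jj_of (i : I) (q : G ⧸ H i) :
    jj H ρ hinj (FreeGroup.of (⟨i, q⟩ : XX H)) = kk H ρ hinj i q :=
  FreeGroup.lift_apply_of

/-- The underlying function of the permutation corresponding to a stable letter. -/
noncomputable def TiFun (i : I) (p : FreeGroup (XX H) × G) : FreeGroup (XX H) × G :=
  (p.1 * FreeGroup.of (⟨i, QuotientGroup.mk p.2⟩ : XX H),
    B H ρ hinj i (QuotientGroup.mk p.2) * ρ i (hElt H i p.2))

theorem TiFun_fst (i : I) (p : FreeGroup (XX H) × G) :
    (TiFun H ρ hinj i p).1 = p.1 * FreeGroup.of (⟨i, QuotientGroup.mk p.2⟩ : XX H) := rfl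

theorem TiFun_snd (i : I) (p : FreeGroup (XX H) × G) :
    (TiFun H ρ hinj i p).2 = B H ρ hinj i (QuotientGroup.mk p.2) * ρ i (hElt H i p.2) := rfl

theorem mk_range_B_mul (i : I) (q : G ⧸ H i) (h : H i) :
    (QuotientGroup.mk (B H ρ hinj i q * ρ i h) : G ⧸ (ρ i).range) = ep H ρ hinj i q := by
  rw [QuotientGroup.mk_mul_of_mem _ (show ρ i h ∈ (ρ i).range from ⟨h, rfl⟩), mk_B]

theorem TiFun_bijective (i : I) : Function.Bijective (TiFun H ρ hinj i) := by
  constructor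
  · rintro ⟨w, g⟩ ⟨w', g'⟩ hp
    have h2 := congrArg Prod.snd hp
    have h3 := congrArg Prod.fst hp
    rw [TiFun_snd, TiFun_snd] at h2
    rw [TiFun_fst, TiFun_fst] at h3
    have hq : (QuotientGroup.mk g : G ⧸ H i) = QuotientGroup.mk g' := by
      have hc := congrArg (QuotientGroup.mk (s := (ρ i).range)) h2
      rw [mk_range_B_mul, mk_range_B_mul] at hc
      exact (ep H ρ hinj i).injective hc
    rw [hq] at h2
    have hh : hElt H i g = hElt H i g' := hinj i (mul_left_cancel h2)
    have hg : g = g' := by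
      have e1 := out_mul_hElt H i g
      have e2 := out_mul_hElt H i g'
      rw [← e1, ← e2, hq, hh]
    refine Prod.ext ?_ hg
    rw [hq] at h3
    exact mul_right_cancel h3
  · rintro ⟨w', g'⟩
    set q : G ⧸ H i := (ep H ρ hinj i).symm (QuotientGroup.mk g') with hqdef
    have hmk : (QuotientGroup.mk (B H ρ hinj i q) : G ⧸ (ρ i).range) = QuotientGroup.mk g' := by
      rw [mk_B, hqdef, Equiv.apply_symm_apply]
    have hmem : (B H ρ hinj i q)⁻¹ * g' ∈ (ρ i).range := QuotientGroup.eq.mp hmk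
    obtain ⟨h, hh⟩ := hmem
    refine ⟨(w' * (FreeGroup.of (⟨i, q⟩ : XX H))⁻¹, q.out * h), ?_⟩
    have hq : (QuotientGroup.mk (q.out * (h : G)) : G ⧸ H i) = q := by
      rw [QuotientGroup.mk_mul_of_mem _ h.2, QuotientGroup.out_eq']
    refine Prod.ext ?_ ?_
    · rw [TiFun_fst]
      show w' * (FreeGroup.of (⟨i, q⟩ : XX H))⁻¹ *
        FreeGroup.of (⟨i, QuotientGroup.mk (q.out * (h : G))⟩ : XX H) = w'
      rw [hq, inv_mul_cancel_right]
    · rw [TiFun_snd]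
      show B H ρ hinj i (QuotientGroup.mk (q.out * (h : G))) *
          ρ i (hElt H i (q.out * (h : G))) = g'
      rw [hq, hElt_out_mul, hh, mul_inv_cancel_left]

/-- The permutation of `FreeGroup XX × G` corresponding to a stable letter. -/
noncomputable def Ti (i : I) : Equiv.Perm (FreeGroup (XX H) × G) :=
  Equiv.ofBijective _ (TiFun_bijective H ρ hinj i)

theorem Ti_apply (i : I) (p : FreeGroup (XX H) × G) :
    Ti H ρ hinj i p = TiFun H ρ hinj i p := rfl

theorem Ti_tau (i : I) (h : H i) (p : FreeGroup (XX H) × G) :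
    Ti H ρ hinj i (tau H (h : G) p) = tau H (ρ i h) (Ti H ρ hinj i p) := by
  obtain ⟨w, g⟩ := p
  rw [tau_apply, Ti_apply, Ti_apply, tau_apply]
  show (w * FreeGroup.of (⟨i, QuotientGroup.mk (g * (h : G))⟩ : XX H),
      B H ρ hinj i (QuotientGroup.mk (g * (h : G))) * ρ i (hElt H i (g * (h : G)))) = _
  have hq : (QuotientGroup.mk (g * (h : G)) : G ⧸ H i) = QuotientGroup.mk g :=
    QuotientGroup.mk_mul_of_mem g h.2
  rw [hElt_mul, hq, map_mul, ← mul_assoc]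
  rfl

/-- The generating data for the (right) action of `Γ` on `FreeGroup XX × G`. -/
noncomputable def fgen : G ⊕ I → (Equiv.Perm (FreeGroup (XX H) × G))ᵐᵒᵖ :=
  Sum.elim (fun g => MulOpposite.op (tau H g)) (fun i => MulOpposite.op (Ti H ρ hinj i))

theorem fgen_rels : ∀ r ∈ grpHNNRels G H ρ, FreeGroup.lift (fgen H ρ hinj) r = 1 := by
  rintro r (⟨g₁, g₂, rfl⟩ | rfl | ⟨i, h, rfl⟩)
  · simp only [map_mul, map_inv, FreeGroup.lift_apply_of, fgen, Sum.elim_inl]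
    rw [← MulOpposite.op_inv, ← MulOpposite.op_mul, ← MulOpposite.op_mul,
      MulOpposite.op_eq_one_iff]
    have hmul : tau H g₂ * tau H g₁ = tau H (g₁ * g₂) := by
      apply Equiv.ext
      rintro ⟨w, g⟩
      show (w, g * g₁ * g₂) = (w, g * (g₁ * g₂))
      rw [mul_assoc]
    rw [hmul]
    group
  · simp only [FreeGroup.lift_apply_of, fgen, Sum.elim_inl, MulOpposite.op_eq_one_iff]
    apply Equiv.ext
    rintro ⟨w, g⟩
    show (w, g * 1) = (w, g)
    rw [mul_one]
  · simp only [map_mul, map_inv, FreeGroup.lift_apply_of, fgen, Sum.elim_inl, Sum.elim_inr]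
    rw [← MulOpposite.op_inv, ← MulOpposite.op_inv, ← MulOpposite.op_mul,
      ← MulOpposite.op_mul, ← MulOpposite.op_mul, MulOpposite.op_eq_one_iff]
    have key : Ti H ρ hinj i * tau H (h : G) = tau H (ρ i h) * Ti H ρ hinj i := by
      apply Equiv.ext
      intro p
      rw [Equiv.Perm.mul_apply, Equiv.Perm.mul_apply]
      exact Ti_tau H ρ hinj i h p
    calc (Ti H ρ hinj i)⁻¹ * ((tau H (ρ i h))⁻¹ * (Ti H ρ hinj i * tau H (h : G)))
        = (Ti H ρ hinj i)⁻¹ * ((tau H (ρ i h))⁻¹ * (tau H (ρ i h) * Ti H ρ hinj i)) := by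
          rw [key]
      _ = 1 := by group

/-- The (right) action of `Γ` on `FreeGroup XX × G`. -/
noncomputable def psi : PresentedGroup (grpHNNRels G H ρ) →*
    (Equiv.Perm (FreeGroup (XX H) × G))ᵐᵒᵖ :=
  PresentedGroup.toGroup (fgen_rels H ρ hinj)

noncomputable def act (γ : PresentedGroup (grpHNNRels G H ρ)) :
    Equiv.Perm (FreeGroup (XX H) × G) :=
  (psi H ρ hinj γ).unop

theorem act_mul (a b : PresentedGroup (grpHNNRels G H ρ)) (p : FreeGroup (XX H) × G) :
    act H ρ hinj (a * b) p = act H ρ hinj b (act H ρ hinj a p) := by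
  show ((psi H ρ hinj (a * b)).unop) p = _
  rw [map_mul, MulOpposite.unop_mul, Equiv.Perm.mul_apply]
  rfl

theorem act_inv (a : PresentedGroup (grpHNNRels G H ρ)) :
    act H ρ hinj a⁻¹ = (act H ρ hinj a)⁻¹ := by
  show (psi H ρ hinj a⁻¹).unop = _
  rw [map_inv, MulOpposite.unop_inv]
  rfl

theorem act_em (g : G) (p : FreeGroup (XX H) × G) :
    act H ρ hinj (em H ρ g) p = (p.1, p.2 * g) := by
  show ((psi H ρ hinj (PresentedGroup.of (Sum.inl g))).unop) p = _
  rw [psi, PresentedGroup.toGroup.of]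
  rfl

theorem act_tt (i : I) (p : FreeGroup (XX H) × G) :
    act H ρ hinj (tt H ρ i) p = TiFun H ρ hinj i p := by
  show ((psi H ρ hinj (PresentedGroup.of (Sum.inr i))).unop) p = _
  rw [psi, PresentedGroup.toGroup.of]
  rfl

theorem act_jj (w : FreeGroup (XX H)) (v : FreeGroup (XX H)) :
    act H ρ hinj (jj H ρ hinj w) (v, 1) = (v * w, 1) := by
  induction w using FreeGroup.induction_on generalizing v with
  | C1 =>
    rw [map_one, mul_one]
    show ((psi H ρ hinj 1).unop) (v, 1) = (v, 1)
    rw [map_one]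
    rfl
  | of x =>
    obtain ⟨i, q⟩ := x
    have hpure : (pure (⟨i, q⟩ : XX H) : FreeGroup (XX H)) = FreeGroup.of ⟨i, q⟩ := rfl
    rw [jj_of, kk]
    rw [act_mul, act_mul]
    rw [act_em]
    have h1 : ((1 : G) * q.out) = q.out := one_mul _
    rw [h1, act_tt]
    show act H ρ hinj (em H ρ (B H ρ hinj i q))⁻¹
      (v * FreeGroup.of (⟨i, QuotientGroup.mk q.out⟩ : XX H),
        B H ρ hinj i (QuotientGroup.mk q.out) * ρ i (hElt H i q.out)) = _
    have hq : (QuotientGroup.mk q.out : G ⧸ H i) = q := QuotientGroup.out_eq' q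
    have h0 : hElt H i q.out = 1 := by
      have := hElt_out_mul H i q 1
      simpa using this
    rw [hq, h0, map_one, mul_one]
    have hmi : (em H ρ (B H ρ hinj i q))⁻¹ = em H ρ (B H ρ hinj i q)⁻¹ := (map_inv _ _).symm
    rw [hmi, act_em]
    rw [mul_inv_cancel]
  | inv_of x ih =>
    have hpure : (pure x : FreeGroup (XX H)) = FreeGroup.of x := rfl
    rw [map_inv, act_inv]
    have hx := ih (v := v * (FreeGroup.of x)⁻¹)
    rw [inv_mul_cancel_right] at hx
    rw [← hx]
    exact Equiv.symm_apply_apply _ _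
  | mul w₁ w₂ ih₁ ih₂ =>
    rw [map_mul, act_mul, ih₁, ih₂, mul_assoc]

theorem act_full (w : FreeGroup (XX H)) (g : G) :
    act H ρ hinj (jj H ρ hinj w * em H ρ g) ((1 : FreeGroup (XX H)), (1 : G)) = (w, g) := by
  rw [act_mul, act_jj, act_em, one_mul, one_mul]

/-- The decomposition predicate. -/
def PP (γ : PresentedGroup (grpHNNRels G H ρ)) : Prop :=
  ∀ (w : FreeGroup (XX H)) (g : G), ∃ (w' : FreeGroup (XX H)) (g' : G),
    jj H ρ hinj w * em H ρ g * γ = jj H ρ hinj w' * em H ρ g'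

theorem PP_one : PP H ρ hinj 1 := fun w g => ⟨w, g, by rw [mul_one]⟩

theorem PP_mul {a b : PresentedGroup (grpHNNRels G H ρ)} (ha : PP H ρ hinj a)
    (hb : PP H ρ hinj b) : PP H ρ hinj (a * b) := by
  intro w g
  obtain ⟨w', g', h1⟩ := ha w g
  obtain ⟨w'', g'', h2⟩ := hb w' g'
  exact ⟨w'', g'', by rw [← mul_assoc, h1, h2]⟩

theorem PP_em (h : G) : PP H ρ hinj (em H ρ h) := by
  intro w g
  exact ⟨w, g * h, by rw [map_mul, mul_assoc]⟩

theorem PP_em_inv (h : G) : PP H ρ hinj (em H ρ h)⁻¹ := by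
  have hme : (em H ρ h)⁻¹ = em H ρ h⁻¹ := (map_inv _ _).symm
  rw [hme]
  exact PP_em H ρ hinj h⁻¹

theorem kk_mul_em_B (i : I) (q : G ⧸ H i) :
    kk H ρ hinj i q * em H ρ (B H ρ hinj i q) = em H ρ q.out * tt H ρ i := by
  rw [kk, inv_mul_cancel_right]

theorem PP_tt (i : I) : PP H ρ hinj (tt H ρ i) := by
  intro w g
  refine ⟨w * FreeGroup.of (⟨i, QuotientGroup.mk g⟩ : XX H),
    B H ρ hinj i (QuotientGroup.mk g) * ρ i (hElt H i g), ?_⟩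
  rw [map_mul, jj_of, map_mul]
  have hg : g = ((QuotientGroup.mk g : G ⧸ H i)).out * (hElt H i g : G) :=
    (out_mul_hElt H i g).symm
  calc jj H ρ hinj w * em H ρ g * tt H ρ i
      = jj H ρ hinj w * (em H ρ ((QuotientGroup.mk g : G ⧸ H i)).out *
          (em H ρ (hElt H i g : G) * tt H ρ i)) := by
        rw [mul_assoc]
        congr 1
        rw [← mul_assoc, ← map_mul, ← hg]
    _ = jj H ρ hinj w * (em H ρ ((QuotientGroup.mk g : G ⧸ H i)).out * (tt H ρ i *
          em H ρ (ρ i (hElt H i g)))) := by rw [em_tt]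
    _ = jj H ρ hinj w * (kk H ρ hinj i (QuotientGroup.mk g) *
          em H ρ (B H ρ hinj i (QuotientGroup.mk g)) * em H ρ (ρ i (hElt H i g))) := by
        rw [kk_mul_em_B, mul_assoc]
    _ = jj H ρ hinj w * kk H ρ hinj i (QuotientGroup.mk g) *
          (em H ρ (B H ρ hinj i (QuotientGroup.mk g)) * em H ρ (ρ i (hElt H i g))) := by
        rw [mul_assoc, mul_assoc]

theorem PP_tt_inv (i : I) : PP H ρ hinj (tt H ρ i)⁻¹ := by
  intro w g
  set q : G ⧸ H i := (ep H ρ hinj i).symm (QuotientGroup.mk g) with hqdef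
  have hmk : (QuotientGroup.mk (B H ρ hinj i q) : G ⧸ (ρ i).range) = QuotientGroup.mk g := by
    rw [mk_B, hqdef, Equiv.apply_symm_apply]
  obtain ⟨h, hh⟩ := QuotientGroup.eq.mp hmk
  have hg : g = B H ρ hinj i q * ρ i h := by rw [hh, mul_inv_cancel_left]
  refine ⟨w * (FreeGroup.of (⟨i, q⟩ : XX H))⁻¹, q.out * (h : G), ?_⟩
  rw [map_mul, map_inv, jj_of, map_mul]
  have hkk : (kk H ρ hinj i q)⁻¹ =
      em H ρ (B H ρ hinj i q) * ((tt H ρ i)⁻¹ * (em H ρ q.out)⁻¹) := by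
    rw [kk]
    group
  calc jj H ρ hinj w * em H ρ g * (tt H ρ i)⁻¹
      = jj H ρ hinj w * (em H ρ (B H ρ hinj i q) *
          (em H ρ (ρ i h) * (tt H ρ i)⁻¹)) := by
        rw [hg, map_mul, mul_assoc, mul_assoc]
    _ = jj H ρ hinj w * (em H ρ (B H ρ hinj i q) *
          ((tt H ρ i)⁻¹ * em H ρ (h : G))) := by rw [em_rho_tt_inv]
    _ = jj H ρ hinj w * ((kk H ρ hinj i q)⁻¹ * (em H ρ q.out * em H ρ (h : G))) := by
        rw [hkk]
        group
    _ = jj H ρ hinj w * (kk H ρ hinj i q)⁻¹ * (em H ρ q.out * em H ρ (h : G)) := by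
        rw [mul_assoc]

/-- The subgroup of elements whose multiples decompose. -/
noncomputable def Dsub : Subgroup (PresentedGroup (grpHNNRels G H ρ)) where
  carrier := {γ | PP H ρ hinj γ ∧ PP H ρ hinj γ⁻¹}
  one_mem' := ⟨PP_one H ρ hinj, by rw [inv_one]; exact PP_one H ρ hinj⟩
  mul_mem' := by
    rintro a b ⟨ha, ha'⟩ ⟨hb, hb'⟩
    refine ⟨PP_mul H ρ hinj ha hb, ?_⟩
    rw [mul_inv_rev]
    exact PP_mul H ρ hinj hb' ha'
  inv_mem' := by
    rintro a ⟨ha, ha'⟩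
    exact ⟨ha', by rw [inv_inv]; exact ha⟩

theorem PP_all (γ : PresentedGroup (grpHNNRels G H ρ)) : PP H ρ hinj γ := by
  have hmem : γ ∈ Dsub H ρ hinj := by
    apply PresentedGroup.generated_by
    rintro (h | i)
    · exact ⟨PP_em H ρ hinj h, PP_em_inv H ρ hinj h⟩
    · exact ⟨PP_tt H ρ hinj i, PP_tt_inv H ρ hinj i⟩
  exact hmem.1

end Stmt15Aux

/-- a group HNN-extension `Γ` of a finite group `G` is a Zappa–Szép product
of a free group and `G`: there are a set `X` and a homomorphism `j : FG(X) → Γ` such that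
`(w, g) ↦ j(w)·[g]` is a bijection `FG(X) × G → Γ`. -/
theorem stmt15 (G : Type u) [Group G] [Finite G] {I : Type v} (H : I → Subgroup G)
    (ρ : ∀ i, H i →* G) (hinj : ∀ i, Function.Injective (ρ i)) :
    ∃ (X : Type (max u v)) (j : FreeGroup X →* PresentedGroup (grpHNNRels G H ρ)),
      Function.Bijective fun p : FreeGroup X × G =>
        j p.1 * PresentedGroup.of (Sum.inl p.2) := by
  classical
  refine ⟨Stmt15Aux.XX H, Stmt15Aux.jj H ρ hinj, ?_, ?_⟩
  · -- injectivity
    rintro ⟨w, g⟩ ⟨w', g'⟩ hp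
    have hp' : Stmt15Aux.jj H ρ hinj w * Stmt15Aux.em H ρ g =
        Stmt15Aux.jj H ρ hinj w' * Stmt15Aux.em H ρ g' := hp
    have hact := congrArg
      (fun γ => Stmt15Aux.act H ρ hinj γ ((1 : FreeGroup (Stmt15Aux.XX H)), (1 : G))) hp'
    simp only [Stmt15Aux.act_full] at hact
    exact Prod.ext (congrArg Prod.fst hact) (congrArg Prod.snd hact)
  · -- surjectivity
    intro γ
    obtain ⟨w', g', hw⟩ := Stmt15Aux.PP_all H ρ hinj γ 1 1
    refine ⟨(w', g'), ?_⟩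
    show Stmt15Aux.jj H ρ hinj w' * Stmt15Aux.em H ρ g' = γ
    rw [← hw, map_one, map_one, one_mul, one_mul]
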